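/- arXiv:math/0503166 — 5 statements merged into one kernel-verified Lean document; each statement's English description precedes it below -/
import Mathlib

section
/- For any group G, the map R : G × G → G × G defined by R(x,y) = (x⁻¹ y⁻¹ x, y² x) satisfies the set-theoretic Yang–Baxter equation. -/
/-- `R × 1` acting on the first two factors of `X × X × X`. -/
def R12 {X : Type*} (R : X × X → X × X) : X × X × X → X × X × X :=
  fun p => ((R (p.1, p.2.1)).1, (R (p.1, p.2.1)).2, p.2.2)

/-- `1 × R` acting on the last two factors of `X × X × X`. -/
def R23 {X : Type*} (R : X × X → X × X) : X × X × X → X × X × X :=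
  fun p => (p.1, R p.2)

/-- `R` is a solution to the set-theoretic Yang–Baxter equation. -/
def IsSYBE {X : Type*} (R : X × X → X × X) : Prop :=
  R12 R ∘ R23 R ∘ R12 R = R23 R ∘ R12 R ∘ R23 R

theorem stmt5 (G : Type*) [Group G] :
    IsSYBE (fun p : G × G => (p.1⁻¹ * p.2⁻¹ * p.1, p.2 ^ 2 * p.1)) := by
  funext p
  obtain ⟨x, y, z⟩ := p
  simp only [IsSYBE, R12, R23, Function.comp, Prod.mk.injEq]
  refine ⟨?_, ?_, ?_⟩ <;> · simp only [sq]; group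
end

section
/- Let G be a group, V a left module over the group ring ℤ[G], and let u, v : G × G → G together with u₁, u₂, v₁, v₂ : G × G → ℤ[G] satisfy the nine 'derivative' equations: for all x,y,z ∈ G, (i) u₁(u(x,y), u(v(x,y),z)) u₁(x,y) + u₂(u(x,y), u(v(x,y),z)) u₁(v(x,y),z) v₁(x,y) = u₁(x, u(y,z)); (ii) u₁(u(x,y), u(v(x,y),z)) u₂(x,y) + u₂(u(x,y), u(v(x,y),z)) u₁(v(x,y),z) v₂(x,y) = u₂(x, u(y,z)) u₁(y,z); (iii) u₂(u(x,y), u(v(x,y),z)) u₂(v(x,y),z) = u₂(x, u(y,z)) u₂(y,z); (iv) v₁(u(x,y), u(v(x,y),z)) u₁(x,y) + v₂(u(x,y), u(v(x,y),z)) u₁(v(x,y),z) v₁(x,y) = u₁(v(x,u(y,z)), v(y,z)) v₁(x, u(y,z)); (v) v₁(u(x,y), u(v(x,y),z)) u₂(x,y) + v₂(u(x,y), u(v(x,y),z)) u₁(v(x,y),z) v₂(x,y) = u₁(v(x,u(y,z)), v(y,z)) v₂(x, u(y,z)) u₁(y,z) + u₂(v(x,u(y,z)), v(y,z)) v₁(y,z);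 (vi) v₂(u(x,y), u(v(x,y),z)) u₂(v(x,y),z) = u₁(v(x,u(y,z)), v(y,z)) v₂(x,u(y,z)) u₂(y,z) + u₂(v(x,u(y,z)), v(y,z)) v₂(y,z); (vii) v₁(v(x,y),z) v₁(x,y) = v₁(v(x,u(y,z)), v(y,z)) v₁(x, u(y,z)); (viii) v₁(v(x,y),z) v₂(x,y) = v₁(v(x,u(y,z)), v(y,z)) v₂(x,u(y,z)) u₁(y,z) + v₂(v(x,u(y,z)), v(y,z)) v₁(y,z); (ix) v₂(v(x,y),z) = v₁(v(x,u(y,z)), v(y,z)) v₂(x,u(y,z)) u₂(y,z) + v₂(v(x,u(y,z)), v(y,z)) v₂(y,z). Moreover suppose u, v satisfy the three Wada equations (1) u(u(x,y), u(v(x,y),z)) = u(x, u(y,z)), (2) v(u(x,y), u(v(x,y),z)) = u(v(x,u(y,z)), v(y,z)), (3) v(v(x,y),z) = v(v(x,u(y,z)), v(y,z)). Then the map R : (G × V)² → (G × V)² defined by R((x,a),(y,b)) = ((u(x,y), u₁(x,y)·a + u₂(x,y)·b), (v(x,y), v₁(x,y)·a + v₂(x,y)·b)) is a solution to the set-theoretic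 Yang–Baxter equation on G × V. -/
open MonoidAlgebra in
theorem stmt7 (G : Type*) [Group G] (V : Type*) [AddCommGroup V]
    [Module (MonoidAlgebra ℤ G) V]
    (u v : G × G → G) (u₁ u₂ v₁ v₂ : G × G → MonoidAlgebra ℤ G)
    (hi : ∀ x y z : G,
      u₁ (u (x,y), u (v (x,y), z)) * u₁ (x,y)
        + u₂ (u (x,y), u (v (x,y), z)) * u₁ (v (x,y), z) * v₁ (x,y)
      = u₁ (x, u (y,z)))
    (hii : ∀ x y z : G,
      u₁ (u (x,y), u (v (x,y), z)) * u₂ (x,y)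
        + u₂ (u (x,y), u (v (x,y), z)) * u₁ (v (x,y), z) * v₂ (x,y)
      = u₂ (x, u (y,z)) * u₁ (y,z))
    (hiii : ∀ x y z : G,
      u₂ (u (x,y), u (v (x,y), z)) * u₂ (v (x,y), z)
      = u₂ (x, u (y,z)) * u₂ (y,z))
    (hiv : ∀ x y z : G,
      v₁ (u (x,y), u (v (x,y), z)) * u₁ (x,y)
        + v₂ (u (x,y), u (v (x,y), z)) * u₁ (v (x,y), z) * v₁ (x,y)
      = u₁ (v (x, u (y,z)), v (y,z)) * v₁ (x, u (y,z)))
    (hv : ∀ x y z : G,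
      v₁ (u (x,y), u (v (x,y), z)) * u₂ (x,y)
        + v₂ (u (x,y), u (v (x,y), z)) * u₁ (v (x,y), z) * v₂ (x,y)
      = u₁ (v (x, u (y,z)), v (y,z)) * v₂ (x, u (y,z)) * u₁ (y,z)
        + u₂ (v (x, u (y,z)), v (y,z)) * v₁ (y,z))
    (hvi : ∀ x y z : G,
      v₂ (u (x,y), u (v (x,y), z)) * u₂ (v (x,y), z)
      = u₁ (v (x, u (y,z)), v (y,z)) * v₂ (x, u (y,z)) * u₂ (y,z)
        + u₂ (v (x, u (y,z)), v (y,z)) * v₂ (y,z))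
    (hvii : ∀ x y z : G,
      v₁ (v (x,y), z) * v₁ (x,y)
      = v₁ (v (x, u (y,z)), v (y,z)) * v₁ (x, u (y,z)))
    (hviii : ∀ x y z : G,
      v₁ (v (x,y), z) * v₂ (x,y)
      = v₁ (v (x, u (y,z)), v (y,z)) * v₂ (x, u (y,z)) * u₁ (y,z)
        + v₂ (v (x, u (y,z)), v (y,z)) * v₁ (y,z))
    (hix : ∀ x y z : G,
      v₂ (v (x,y), z)
      = v₁ (v (x, u (y,z)), v (y,z)) * v₂ (x, u (y,z)) * u₂ (y,z)
        + v₂ (v (x, u (y,z)), v (y,z)) * v₂ (y,z))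
    (h1 : ∀ x y z : G, u (u (x, y), u (v (x, y), z)) = u (x, u (y, z)))
    (h2 : ∀ x y z : G, v (u (x, y), u (v (x, y), z)) = u (v (x, u (y, z)), v (y, z)))
    (h3 : ∀ x y z : G, v (v (x, y), z) = v (v (x, u (y, z)), v (y, z))) :
    IsSYBE (fun p : (G × V) × (G × V) =>
      ((u (p.1.1, p.2.1), u₁ (p.1.1, p.2.1) • p.1.2 + u₂ (p.1.1, p.2.1) • p.2.2),
       (v (p.1.1, p.2.1), v₁ (p.1.1, p.2.1) • p.1.2 + v₂ (p.1.1, p.2.1) • p.2.2))) := by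
  unfold IsSYBE R12 R23
  funext p
  obtain ⟨⟨x,a⟩,⟨y,b⟩,⟨z,c⟩⟩ := p
  simp only [Function.comp_apply]
  refine Prod.ext (Prod.ext ?_ ?_) (Prod.ext (Prod.ext ?_ ?_) (Prod.ext ?_ ?_)) <;> dsimp only
  · exact h1 x y z
  · trans (u₁ (x, u (y,z)) • a + (u₂ (x, u (y,z)) * u₁ (y,z)) • b
        + (u₂ (x, u (y,z)) * u₂ (y,z)) • c)
    · rw [← hi x y z, ← hii x y z, ← hiii x y z]
      simp only [add_smul, mul_smul, smul_add]; try abel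
    · simp only [add_smul, mul_smul, smul_add]; try abel
  · exact h2 x y z
  · trans ((u₁ (v (x, u (y,z)), v (y,z)) * v₁ (x, u (y,z))) • a
        + (u₁ (v (x, u (y,z)), v (y,z)) * v₂ (x, u (y,z)) * u₁ (y,z)
            + u₂ (v (x, u (y,z)), v (y,z)) * v₁ (y,z)) • b
        + (u₁ (v (x, u (y,z)), v (y,z)) * v₂ (x, u (y,z)) * u₂ (y,z)
            + u₂ (v (x, u (y,z)), v (y,z)) * v₂ (y,z)) • c)
    · rw [← hiv x y z, ← hv x y z, ← hvi x y z]
      simp only [add_smul, mul_smul, smul_add]; try abel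
    · simp only [add_smul, mul_smul, smul_add]; try abel
  · exact h3 x y z
  · trans ((v₁ (v (x, u (y,z)), v (y,z)) * v₁ (x, u (y,z))) • a
        + (v₁ (v (x, u (y,z)), v (y,z)) * v₂ (x, u (y,z)) * u₁ (y,z)
            + v₂ (v (x, u (y,z)), v (y,z)) * v₁ (y,z)) • b
        + (v₁ (v (x, u (y,z)), v (y,z)) * v₂ (x, u (y,z)) * u₂ (y,z)
            + v₂ (v (x, u (y,z)), v (y,z)) * v₂ (y,z)) • c)
    · rw [← hvii x y z, ← hviii x y z, ← hix x y z]
      simp only [add_smul, mul_smul, smul_add]; try abel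
    · simp only [add_smul, mul_smul, smul_add]; try abel
end

section
/- Let G be a group and V a left ℤ[G]-module. The map R : (G × V)² → (G × V)² defined by R((x,a),(y,b)) = ((y⁻¹, -y⁻¹·b), (y x y, y·a + (1 + yx)·b)) is a solution to the set-theoretic Yang–Baxter equation on G × V. -/
open MonoidAlgebra in
theorem stmt8 (G : Type*) [Group G] (V : Type*) [AddCommGroup V]
    [Module (MonoidAlgebra ℤ G) V] :
    IsSYBE (fun p : (G × V) × (G × V) =>
      ((p.2.1⁻¹, (-(of ℤ G p.2.1⁻¹)) • p.2.2),
       (p.2.1 * p.1.1 * p.2.1,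
        (of ℤ G p.2.1) • p.1.2 + (1 + of ℤ G (p.2.1 * p.1.1)) • p.2.2))) := by
  funext ⟨⟨x, a⟩, ⟨y, b⟩, ⟨z, c⟩⟩
  simp only [Function.comp, R12, R23, Prod.mk.injEq]
  refine ⟨trivial, ⟨by group, ?_⟩, by group, ?_⟩ <;>
  · simp only [smul_add, smul_neg, neg_smul, add_smul, smul_smul, mul_add, add_mul,
      neg_mul, mul_neg, neg_neg, mul_one, one_mul, ← map_mul, mul_assoc, mul_inv_rev,
      inv_inv, mul_inv_cancel_left, inv_mul_cancel_left, mul_inv_cancel, inv_mul_cancel]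
    abel
end

section
/- Let G be a group and V a left ℤ[G]-module. The map R : (G × V)² → (G × V)² defined by R((x,a),(y,b)) = ((x⁻¹ y⁻¹ x, (-x⁻¹ + x⁻¹y⁻¹)·a + (-x⁻¹y⁻¹)·b), (y² x, y²·a + (1 + y)·b)) is a solution to the set-theoretic Yang–Baxter equation on G × V. -/
open MonoidAlgebra in
theorem stmt9 (G : Type*) [Group G] (V : Type*) [AddCommGroup V]
    [Module (MonoidAlgebra ℤ G) V] :
    IsSYBE (fun p : (G × V) × (G × V) =>
      ((p.1.1⁻¹ * p.2.1⁻¹ * p.1.1,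
        (-(of ℤ G p.1.1⁻¹) + of ℤ G (p.1.1⁻¹ * p.2.1⁻¹)) • p.1.2
          + (-(of ℤ G (p.1.1⁻¹ * p.2.1⁻¹))) • p.2.2),
       (p.2.1 ^ 2 * p.1.1,
        (of ℤ G (p.2.1 ^ 2)) • p.1.2 + (1 + of ℤ G p.2.1) • p.2.2))) := by
  unfold IsSYBE
  funext p
  obtain ⟨⟨x, a⟩, ⟨y, b⟩, ⟨z, c⟩⟩ := p
  simp only [R12, R23, Function.comp_apply]
  refine Prod.ext (Prod.ext ?_ ?_) (Prod.ext (Prod.ext ?_ ?_) (Prod.ext ?_ ?_))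
  · simp only
    simp only [pow_two, mul_assoc, mul_inv_rev, inv_inv, mul_inv_cancel_left,
      inv_mul_cancel_left, mul_inv_cancel, inv_mul_cancel, mul_one, one_mul]
  · simp only
    simp only [pow_two, mul_add, add_mul, neg_mul, mul_neg, one_mul, mul_one, add_smul,
      neg_smul, one_smul, smul_add, smul_neg, smul_smul, neg_neg, ← map_mul, mul_assoc,
      mul_inv_rev, inv_inv, mul_inv_cancel_left, inv_mul_cancel_left, mul_inv_cancel,
      inv_mul_cancel, map_one]
    abel
  · simp only
    simp only [pow_two, mul_assoc, mul_inv_rev, inv_inv, mul_inv_cancel_left,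
      inv_mul_cancel_left, mul_inv_cancel, inv_mul_cancel, mul_one, one_mul]
  · simp only
    simp only [pow_two, mul_add, add_mul, neg_mul, mul_neg, one_mul, mul_one, add_smul,
      neg_smul, one_smul, smul_add, smul_neg, smul_smul, neg_neg, ← map_mul, mul_assoc,
      mul_inv_rev, inv_inv, mul_inv_cancel_left, inv_mul_cancel_left, mul_inv_cancel,
      inv_mul_cancel, map_one]
    abel
  · simp only
    simp only [pow_two, mul_assoc, mul_inv_rev, inv_inv, mul_inv_cancel_left,
      inv_mul_cancel_left, mul_inv_cancel, inv_mul_cancel, mul_one, one_mul]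
  · simp only
    simp only [pow_two, mul_add, add_mul, neg_mul, mul_neg, one_mul, mul_one, add_smul,
      neg_smul, one_smul, smul_add, smul_neg, smul_smul, neg_neg, ← map_mul, mul_assoc,
      mul_inv_rev, inv_inv, mul_inv_cancel_left, inv_mul_cancel_left, mul_inv_cancel,
      inv_mul_cancel, map_one]
    abel
end

section
/- Let G be a group and V a left ℤ[G]-module. The map R : (G × V)² → (G × V)² defined by R((x,a),(y,b)) = ((y, b), (y x⁻¹ y, (-y x⁻¹)·a + (1 + y x⁻¹)·b)) is a solution to the set-theoretic Yang–Baxter equation on G × V. -/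
open MonoidAlgebra in
private lemma smul_of_inv_cancel {G : Type*} [Group G] {V : Type*} [AddCommGroup V]
    [Module (MonoidAlgebra ℤ G) V] (g : G) (v : V) :
    of ℤ G g • of ℤ G g⁻¹ • v = v := by
  rw [← mul_smul, ← map_mul, mul_inv_cancel, map_one, one_smul]

open MonoidAlgebra in
private lemma smul_inv_of_cancel {G : Type*} [Group G] {V : Type*} [AddCommGroup V]
    [Module (MonoidAlgebra ℤ G) V] (g : G) (v : V) :
    of ℤ G g⁻¹ • of ℤ G g • v = v := by
  rw [← mul_smul, ← map_mul, inv_mul_cancel, map_one, one_smul]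

open MonoidAlgebra in
theorem stmt11 (G : Type*) [Group G] (V : Type*) [AddCommGroup V]
    [Module (MonoidAlgebra ℤ G) V] :
    IsSYBE (fun p : (G × V) × (G × V) =>
      ((p.2.1, p.2.2),
       (p.2.1 * p.1.1⁻¹ * p.2.1,
        (-(of ℤ G (p.2.1 * p.1.1⁻¹))) • p.1.2
          + (1 + of ℤ G (p.2.1 * p.1.1⁻¹)) • p.2.2))) := by
  funext p
  obtain ⟨⟨x, a⟩, ⟨y, b⟩, ⟨z, c⟩⟩ := p
  simp only [IsSYBE, R12, R23, Function.comp_apply, Prod.mk.injEq]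
  refine ⟨trivial, trivial, by group, ?_⟩
  simp only [mul_inv_rev, inv_inv, map_mul, add_smul, smul_add, one_smul, neg_smul, smul_neg,
    mul_smul, neg_add_rev, neg_neg]
  simp only [smul_of_inv_cancel, smul_inv_of_cancel]
  abel
end
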